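/- Let K be a finite extension of ℚ_p and Γ a discrete subgroup of PGL(2,K). Then Γ contains no parabolic element other than the identity: if A ∈ GL(2,K) satisfies (tr A)² = 4·det A and [A] ∈ Γ, then [A] = 1 in PGL(2,K). -/

import Mathlib

open Matrix

abbrev GL2 (F : Type) [Field F] : Type := Matrix.GeneralLinearGroup (Fin 2) F

abbrev PGL2 (F : Type) [Field F] : Type := GL2 F ⧸ Subgroup.center (GL2 F)

def PGLmk (F : Type) [Field F] : GL2 F →* PGL2 F := QuotientGroup.mk' _

/-- A parabolic matrix minus its half-trace scalar is square-zero. -/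
theorem nilp_aux (F : Type) [Field F] [CharZero F] (a b c d lam : F)
    (hlam : lam = (a + d) / 2)
    (hpar : (a + d) ^ 2 = 4 * (a * d - b * c)) :
    (!![a,b;c,d] - lam • 1) * (!![a,b;c,d] - lam • 1) = 0 := by
  ext i j
  fin_cases i <;> fin_cases j <;>
    simp [Matrix.mul_apply, Fin.sum_univ_two, Matrix.one_apply, hlam]
  · linear_combination (1/4 : F) * hpar
  · ring
  · ring
  · linear_combination (1/4 : F) * hpar

/-- A matrix commuting with the two standard unipotents is scalar-shaped. -/
theorem center_aux (F : Type) [Field F] (B : Matrix (Fin 2) (Fin 2) F)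
    (hE : !![1,1;0,1] * B = B * !![1,1;0,1])
    (hF : !![1,0;1,1] * B = B * !![1,0;1,1]) :
    B 1 0 = 0 ∧ B 0 1 = 0 ∧ B 0 0 = B 1 1 := by
  have e1 := congrFun (congrFun hE 0) 0
  have e2 := congrFun (congrFun hE 0) 1
  have f1 := congrFun (congrFun hF 0) 0
  simp [Matrix.mul_apply, Fin.sum_univ_two] at e1 e2 f1
  exact ⟨e1, f1, by linear_combination -e2⟩

theorem stmt0 (p : ℕ) [Fact p.Prime] (K : Type) [NormedField K] [Algebra ℚ_[p] K]
    [FiniteDimensional ℚ_[p] K]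
    (hnorm : ∀ x : ℚ_[p], ‖algebraMap ℚ_[p] K x‖ = ‖x‖)
    (Γ : Subgroup (PGL2 K)) (hΓ : DiscreteTopology Γ)
    (A : GL2 K)
    (hpar : (Matrix.trace (A : Matrix (Fin 2) (Fin 2) K)) ^ 2
      = 4 * Matrix.det (A : Matrix (Fin 2) (Fin 2) K))
    (hmem : PGLmk K A ∈ Γ) :
    PGLmk K A = 1 := by
  have hCZ : CharZero K := charZero_of_injective_algebraMap (algebraMap ℚ_[p] K).injective
  -- notation for entries
  set Av : Matrix (Fin 2) (Fin 2) K := (A : Matrix (Fin 2) (Fin 2) K) with hAv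
  set a : K := Av 0 0
  set b : K := Av 0 1
  set c : K := Av 1 0
  set d : K := Av 1 1
  have hA_eta : Av = !![a, b; c, d] := Matrix.eta_fin_two Av
  rw [Matrix.trace_fin_two, Matrix.det_fin_two] at hpar
  set lam : K := (a + d) / 2 with hlam
  -- lam ≠ 0
  have hdet : Av.det ≠ 0 := by
    have : IsUnit Av.det := (Matrix.isUnit_iff_isUnit_det Av).mp A.isUnit
    exact this.ne_zero
  have hdet' : a * d - b * c ≠ 0 := by
    rw [hA_eta, Matrix.det_fin_two] at hdet; simpa using hdet
  have hlam_ne : lam ≠ 0 := by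
    intro h
    apply hdet'
    have had : a + d = 0 := by
      rw [hlam, div_eq_zero_iff] at h
      rcases h with h | h
      · exact h
      · exact absurd h two_ne_zero
    have hz : (4:K) * (a * d - b * c) = 0 := by rw [← hpar, had]; ring
    rcases mul_eq_zero.mp hz with h4 | h0
    · exact absurd h4 (by norm_num)
    · exact h0
  -- nilpotent part
  set N : Matrix (Fin 2) (Fin 2) K := !![a, b; c, d] - lam • 1 with hN
  have hN2 : N * N = 0 := nilp_aux K a b c d lam hlam hpar
  set M : Matrix (Fin 2) (Fin 2) K := lam⁻¹ • N with hM
  have hM2 : M * M = 0 := by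
    rw [hM, smul_mul_smul_comm, hN2, smul_zero]
  have hAval : Av = lam • (1 + M) := by
    rw [hM, smul_add, smul_smul, mul_inv_cancel₀ hlam_ne, one_smul, hN, hA_eta]
    abel
  -- the unipotent one-parameter subgroup
  have key : ∀ s t : K, (1 + s • M) * (1 + t • M) = 1 + (s + t) • M := by
    intro s t
    simp [add_mul, mul_add, smul_mul_assoc, mul_smul_comm, hM2, add_smul, smul_smul]
    abel
  let uu : K → GL2 K := fun s =>
    ⟨1 + s • M, 1 + (-s) • M,
      by rw [key]; simp, by rw [key]; simp⟩
  have uu_val : ∀ s, (uu s : Matrix (Fin 2) (Fin 2) K) = 1 + s • M := fun s => rfl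
  have uu_mul : ∀ s t, uu s * uu t = uu (s + t) := fun s t => Units.ext (key s t)
  have uu_zero : uu 0 = 1 := Units.ext (by simp [uu_val])
  have uu_pow : ∀ (n : ℕ) (s : K), uu s ^ n = uu ((n : K) * s) := by
    intro n
    induction n with
    | zero => intro s; simp [uu_zero]
    | succ m ih =>
        intro s
        rw [pow_succ, ih, uu_mul]
        congr 1
        push_cast
        ring
  -- scalar part is central
  let S : GL2 K := ⟨lam • 1, lam⁻¹ • 1,
    by simp [smul_smul, mul_inv_cancel₀ hlam_ne, inv_mul_cancel₀ hlam_ne],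
    by simp [smul_smul, mul_inv_cancel₀ hlam_ne, inv_mul_cancel₀ hlam_ne]⟩
  have hS_center : S ∈ Subgroup.center (GL2 K) := by
    rw [Subgroup.mem_center_iff]
    intro g
    refine Units.ext ?_
    show (g : Matrix (Fin 2) (Fin 2) K) * (lam • 1) = (lam • 1) * (g : Matrix (Fin 2) (Fin 2) K)
    simp [mul_smul_comm, smul_mul_assoc]
  have hone : ∀ g : GL2 K, PGLmk K g = 1 ↔ g ∈ Subgroup.center (GL2 K) := fun g =>
    QuotientGroup.eq_one_iff g
  -- A = S * uu 1
  have hA_dec : A = S * uu 1 := by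
    refine Units.ext ?_
    show Av = (lam • 1) * (1 + (1:K) • M)
    rw [hAval, smul_mul_assoc, one_mul, one_smul]
  have hPGL_A : PGLmk K A = PGLmk K (uu 1) := by
    rw [hA_dec, _root_.map_mul, (hone S).mpr hS_center, one_mul]
  -- case M = 0: A is scalar
  by_cases hM0 : M = 0
  · rw [hPGL_A, hone]
    have : uu 1 = 1 := Units.ext (by simp [uu_val, hM0])
    rw [this]; exact Subgroup.one_mem _
  -- case M ≠ 0: derive a contradiction with discreteness
  exfalso
  set cp : K := (p : K) with hcp
  have hp_prime : p.Prime := Fact.out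
  have hcp_norm : ‖cp‖ < 1 := by
    have : (cp : K) = algebraMap ℚ_[p] K (p : ℚ_[p]) := by
      rw [map_natCast]
    rw [this, hnorm, Padic.norm_p]
    rw [inv_lt_one_iff₀]
    right
    exact_mod_cast hp_prime.one_lt
  have hcp_ne : cp ≠ 0 := Nat.cast_ne_zero.mpr hp_prime.ne_zero
  -- the sequence of powers
  have hpow_mem : ∀ n : ℕ, PGLmk K (uu (cp ^ n)) ∈ Γ := by
    intro n
    have : PGLmk K (uu (cp ^ n)) = (PGLmk K A) ^ (p ^ n) := by
      rw [hPGL_A, ← map_pow, uu_pow]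
      congr 2
      push_cast
      ring
    rw [this]
    exact pow_mem hmem _
  have hpow_ne : ∀ n : ℕ, PGLmk K (uu (cp ^ n)) ≠ 1 := by
    intro n h
    rw [hone] at h
    -- uu (cp^n) commutes with the standard unipotents
    have hEu : IsUnit (!![1,1;0,1] : Matrix (Fin 2) (Fin 2) K) := by
      apply (Matrix.isUnit_iff_isUnit_det _).mpr
      simp [Matrix.det_fin_two]
    have hFu : IsUnit (!![1,0;1,1] : Matrix (Fin 2) (Fin 2) K) := by
      apply (Matrix.isUnit_iff_isUnit_det _).mpr
      simp [Matrix.det_fin_two]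
    obtain ⟨E, hE⟩ := hEu
    obtain ⟨Fm, hF⟩ := hFu
    have hEc := Subgroup.mem_center_iff.mp h E
    have hFc := Subgroup.mem_center_iff.mp h Fm
    have hEc' : !![1,1;0,1] * (1 + (cp^n) • M) = (1 + (cp^n) • M) * !![1,1;0,1] := by
      have := congrArg Units.val hEc
      simpa [hE, uu_val] using this
    have hFc' : !![1,0;1,1] * (1 + (cp^n) • M) = (1 + (cp^n) • M) * !![1,0;1,1] := by
      have := congrArg Units.val hFc
      simpa [hF, uu_val] using this
    obtain ⟨h10, h01, hdiag⟩ := center_aux K _ hEc' hFc'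
    have ht : (cp ^ n : K) ≠ 0 := pow_ne_zero _ hcp_ne
    have hM10 : M 1 0 = 0 := by
      have : (cp^n) * M 1 0 = 0 := by simpa [Matrix.one_apply] using h10
      exact (mul_eq_zero.mp this).resolve_left ht
    have hM01 : M 0 1 = 0 := by
      have : (cp^n) * M 0 1 = 0 := by simpa [Matrix.one_apply] using h01
      exact (mul_eq_zero.mp this).resolve_left ht
    have hM00 : M 0 0 = M 1 1 := by
      have : 1 + (cp^n) * M 0 0 = 1 + (cp^n) * M 1 1 := by
        simpa [Matrix.one_apply] using hdiag
      exact mul_left_cancel₀ ht (add_left_cancel this)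
    -- M * M = 0 forces the diagonal to vanish
    have hM00z : M 0 0 = 0 := by
      have h := congrFun (congrFun hM2 0) 0
      simp [Matrix.mul_apply, Fin.sum_univ_two, hM01, hM10] at h
      first
        | exact h
        | exact mul_self_eq_zero.mp h
    apply hM0
    ext i j
    fin_cases i <;> fin_cases j <;>
      simp [hM00z, hM01, hM10, ← hM00, hM00z]
  -- convergence to 1
  have huu_cont : Continuous uu := by
    apply Units.continuous_iff.mpr
    constructor
    · exact continuous_const.add (continuous_id.smul continuous_const)
    · show Continuous fun t : K => 1 + (-t) • M
      exact continuous_const.add (continuous_id.neg.smul continuous_const)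
  have htend0 : Filter.Tendsto (fun n : ℕ => cp ^ n) Filter.atTop (nhds 0) :=
    tendsto_pow_atTop_nhds_zero_of_norm_lt_one hcp_norm
  have htend1 : Filter.Tendsto (fun n : ℕ => uu (cp ^ n)) Filter.atTop (nhds 1) := by
    have := (huu_cont.tendsto 0).comp htend0
    rwa [uu_zero] at this
  have hq_cont : Continuous (fun g : GL2 K => PGLmk K g) := continuous_quot_mk
  have htend : Filter.Tendsto (fun n : ℕ => PGLmk K (uu (cp ^ n))) Filter.atTop (nhds 1) := by
    have := (hq_cont.tendsto 1).comp htend1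
    simpa [_root_.map_one, Function.comp_def] using this
  -- discreteness: isolate 1 in Γ
  have hopen : IsOpen ({1} : Set Γ) := isOpen_discrete _
  rw [isOpen_induced_iff] at hopen
  obtain ⟨U, hUopen, hUeq⟩ := hopen
  have h1U : (1 : PGL2 K) ∈ U := by
    have : (1 : Γ) ∈ Subtype.val ⁻¹' U := by rw [hUeq]; rfl
    simpa using this
  have hev : ∀ᶠ n in Filter.atTop, PGLmk K (uu (cp ^ n)) ∈ U :=
    htend (hUopen.mem_nhds h1U)
  obtain ⟨n, hn⟩ := hev.exists
  have : (⟨PGLmk K (uu (cp ^ n)), hpow_mem n⟩ : Γ) ∈ Subtype.val ⁻¹' U := hn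
  rw [hUeq] at this
  exact hpow_ne n (by simpa using congrArg Subtype.val this)
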